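/- Let c₀, c_N, c_{2N} ∈ ℂ. Then the system of equations in the real unknown λ given by Im(e^{−iλ} c_N) = 0 and e^{−2iλ} c_{2N} = 3 c̄₀ has a solution λ ∈ ℝ if and only if 3|c₀| = |c_{2N}| and c₀ c_{2N} (c̄_N)² is a nonnegative real number. Moreover, if in addition some of c₀, c_N, c_{2N} is nonzero and these conditions hold, then the set of solutions λ modulo 2π consists of exactly two values, which are antipodal (differ by π). -/

import Mathlib

open Complex

/-- The critical-point system for the averaged function γ_N on the circle of
circular orbits: Im(e^{−iλ} c_N) = 0 and e^{−2iλ} c_{2N} = 3 c̄₀. -/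
def SolvesSystem (c0 cN c2N : ℂ) (l : ℝ) : Prop :=
  (Complex.exp (-(Complex.I * l)) * cN).im = 0 ∧
  Complex.exp (-(2 * Complex.I * l)) * c2N = 3 * (starRingEnd ℂ) c0

lemma lemA (w : ℂ) (h1 : (w^2).im = 0) (h2 : 0 ≤ (w^2).re) : w.im = 0 := by
  have him : (w^2).im = 2*w.re*w.im := by rw [sq, Complex.mul_im]; ring
  have hre : (w^2).re = w.re^2 - w.im^2 := by rw [sq, Complex.mul_re]; ring
  rw [him] at h1; rw [hre] at h2
  rcases mul_eq_zero.1 h1 with h | h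
  · rcases mul_eq_zero.1 h with h | h
    · norm_num at h
    · nlinarith [sq_nonneg w.im]
  · exact h

lemma conj_exp_neg (l : ℝ) :
    (starRingEnd ℂ) (Complex.exp (-(Complex.I * l))) = Complex.exp (Complex.I * l) := by
  rw [← Complex.exp_conj]; congr 1; simp

lemma exp2_eq (l : ℝ) :
    Complex.exp (Complex.I * l) ^ 2 = Complex.exp (2 * Complex.I * l) := by
  rw [sq, ← Complex.exp_add]; congr 1; ring

lemma exp_inv2 (l : ℝ) :
    Complex.exp (2 * Complex.I * l) * Complex.exp (-(2 * Complex.I * l)) = 1 := by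
  rw [← Complex.exp_add]
  simp

lemma key (c0 cN c2N : ℂ) (l : ℝ)
    (h2 : Complex.exp (-(2 * Complex.I * l)) * c2N = 3 * (starRingEnd ℂ) c0) :
    c0 * c2N * ((starRingEnd ℂ) cN) ^ 2 =
      3 * (Complex.normSq c0 : ℂ) *
        ((starRingEnd ℂ) (Complex.exp (-(Complex.I * l)) * cN)) ^ 2 := by
  have hc2N : c2N = Complex.exp (2 * Complex.I * l) * (3 * (starRingEnd ℂ) c0) := by
    rw [← h2, ← mul_assoc, exp_inv2, one_mul]
  have hn : ((Complex.normSq c0 : ℝ) : ℂ) = c0 * (starRingEnd ℂ) c0 := (Complex.mul_conj c0).symm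
  rw [map_mul, conj_exp_neg, hc2N, hn, ← exp2_eq]
  ring

lemma im_formula (cN : ℂ) (l : ℝ) :
    (Complex.exp (-(Complex.I * l)) * cN).im = ‖cN‖ * Real.sin (cN.arg - l) := by
  conv_lhs => rw [← Complex.norm_mul_exp_arg_mul_I cN]
  rw [mul_comm (Complex.exp (-(Complex.I * l))), mul_assoc, ← Complex.exp_add]
  have h : (cN.arg : ℂ) * Complex.I + -(Complex.I * l) = ((cN.arg - l : ℝ) : ℂ) * Complex.I := by
    push_cast; ring
  rw [h, Complex.im_ofReal_mul]
  congr 1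
  rw [Complex.exp_ofReal_mul_I_im]

lemma auto1 (c0 cN c2N : ℂ) (l : ℝ) (hc0 : c0 ≠ 0)
    (h2 : Complex.exp (-(2 * Complex.I * l)) * c2N = 3 * (starRingEnd ℂ) c0)
    (him : (c0 * c2N * ((starRingEnd ℂ) cN) ^ 2).im = 0)
    (hre : 0 ≤ (c0 * c2N * ((starRingEnd ℂ) cN) ^ 2).re) :
    (Complex.exp (-(Complex.I * l)) * cN).im = 0 := by
  set w := (starRingEnd ℂ) (Complex.exp (-(Complex.I * l)) * cN) with hw
  have hkey := key c0 cN c2N l h2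
  rw [hkey] at him hre
  have h3 : (3 : ℂ) * (Complex.normSq c0 : ℂ) = ((3 * Complex.normSq c0 : ℝ) : ℂ) := by
    push_cast; ring
  rw [h3, Complex.im_ofReal_mul] at him
  rw [h3, Complex.re_ofReal_mul] at hre
  have hpos : 0 < 3 * Complex.normSq c0 := by
    have := Complex.normSq_pos.2 hc0; linarith
  have h1 : (w ^ 2).im = 0 := by
    rcases mul_eq_zero.1 him with h | h
    · exact absurd h (ne_of_gt hpos)
    · exact h
  have h2' : 0 ≤ (w ^ 2).re := nonneg_of_mul_nonneg_right hre hpos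
  have hwim := lemA w h1 h2'
  rw [hw, Complex.conj_im] at hwim
  linarith

lemma eq2_char (c0 c2N : ℂ) (hc0 : c0 ≠ 0) (habs : 3 * ‖c0‖ = ‖c2N‖)
    (l : ℝ) :
    (Complex.exp (-(2 * Complex.I * l)) * c2N = 3 * (starRingEnd ℂ) c0) ↔
      ∃ k : ℤ, l = (c2N / (3 * (starRingEnd ℂ) c0)).arg / 2 + k * Real.pi := by
  set u := c2N / (3 * (starRingEnd ℂ) c0) with hu
  have hden : (3 : ℂ) * (starRingEnd ℂ) c0 ≠ 0 := by
    simp [hc0]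
  have habsu : ‖u‖ = 1 := by
    rw [hu, norm_div, norm_mul, Complex.norm_conj]
    rw [show ‖(3:ℂ)‖ = 3 by simp]
    rw [← habs]
    have h0 : ‖c0‖ ≠ 0 := by simpa using hc0
    field_simp
  have hexpu : Complex.exp (u.arg * Complex.I) = u := by
    conv_rhs => rw [← Complex.norm_mul_exp_arg_mul_I u]
    rw [habsu]; simp
  have step1 : (Complex.exp (-(2 * Complex.I * l)) * c2N = 3 * (starRingEnd ℂ) c0) ↔
      Complex.exp (2 * Complex.I * l) = u := by
    constructor
    · intro h
      rw [hu, eq_div_iff hden, ← h, ← mul_assoc, exp_inv2, one_mul]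
    · intro h
      have hc2 : Complex.exp (2 * Complex.I * l) * (3 * (starRingEnd ℂ) c0) = c2N :=
        (eq_div_iff hden).1 h
      rw [← hc2, ← mul_assoc, mul_comm (Complex.exp (-(2 * Complex.I * (l:ℂ)))), exp_inv2,
        one_mul]
  rw [step1]
  constructor
  · intro h
    have heq : Complex.exp (2 * Complex.I * l) = Complex.exp (u.arg * Complex.I) := by
      rw [hexpu, h]
    obtain ⟨n, hn⟩ := Complex.exp_eq_exp_iff_exists_int.1 heq
    refine ⟨n, ?_⟩
    have him := congrArg Complex.im hn
    simp [Complex.add_im, Complex.mul_im, Complex.mul_re] at him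
    linarith
  · rintro ⟨k, rfl⟩
    have heq : Complex.exp (2 * Complex.I * ((u.arg / 2 + (k : ℝ) * Real.pi : ℝ) : ℂ)) =
        Complex.exp (u.arg * Complex.I) :=
      Complex.exp_eq_exp_iff_exists_int.2 ⟨k, by push_cast; ring⟩
    rw [heq, hexpu]

theorem stmt19 (c0 cN c2N : ℂ) :
    ((∃ l : ℝ, SolvesSystem c0 cN c2N l) ↔
      3 * ‖c0‖ = ‖c2N‖ ∧
      (c0 * c2N * ((starRingEnd ℂ) cN) ^ 2).im = 0 ∧
      0 ≤ (c0 * c2N * ((starRingEnd ℂ) cN) ^ 2).re) ∧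
    ((c0 ≠ 0 ∨ cN ≠ 0 ∨ c2N ≠ 0) →
      3 * ‖c0‖ = ‖c2N‖ →
      (c0 * c2N * ((starRingEnd ℂ) cN) ^ 2).im = 0 →
      0 ≤ (c0 * c2N * ((starRingEnd ℂ) cN) ^ 2).re →
      ∃ l0 : ℝ, ∀ l : ℝ,
        SolvesSystem c0 cN c2N l ↔ ∃ k : ℤ, l = l0 + k * Real.pi) := by
  constructor
  · constructor
    · rintro ⟨l, h1, h2⟩
      have habs : 3 * ‖c0‖ = ‖c2N‖ := by
        have h := congrArg (‖·‖) h2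
        rw [norm_mul, norm_mul, Complex.norm_exp] at h
        rw [show (-(2 * Complex.I * (l:ℂ))).re = 0 by simp] at h
        rw [Real.exp_zero, one_mul, Complex.norm_conj] at h
        rw [show ‖(3:ℂ)‖ = 3 by simp] at h
        exact h.symm
      refine ⟨habs, ?_⟩
      rw [key c0 cN c2N l h2]
      have hz : (starRingEnd ℂ) (Complex.exp (-(Complex.I * l)) * cN) =
          (((Complex.exp (-(Complex.I * l)) * cN).re : ℝ) : ℂ) := by
        apply Complex.ext
        · simp
        · rw [Complex.conj_im, h1, Complex.ofReal_im, neg_zero]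
      rw [hz]
      set r := (Complex.exp (-(Complex.I * l)) * cN).re
      rw [show (3 : ℂ) * (Complex.normSq c0 : ℂ) * ((r : ℝ) : ℂ) ^ 2 =
          ((3 * Complex.normSq c0 * r ^ 2 : ℝ) : ℂ) by push_cast; ring]
      constructor
      · exact Complex.ofReal_im _
      · rw [Complex.ofReal_re]
        have h0 : 0 ≤ Complex.normSq c0 := Complex.normSq_nonneg c0
        positivity
    · rintro ⟨habs, him, hre⟩
      by_cases hc0 : c0 = 0
      · subst hc0
        have hc2N : c2N = 0 := by
          simpa using habs.symm
        subst hc2N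
        refine ⟨cN.arg, ?_, by simp⟩
        rw [im_formula]
        simp
      · refine ⟨(c2N / (3 * (starRingEnd ℂ) c0)).arg / 2, ?_, ?_⟩
        · exact auto1 c0 cN c2N _ hc0
            ((eq2_char c0 c2N hc0 habs _).2 ⟨0, by simp⟩) him hre
        · exact (eq2_char c0 c2N hc0 habs _).2 ⟨0, by simp⟩
  · intro hne habs him hre
    by_cases hc0 : c0 = 0
    · subst hc0
      have hc2N : c2N = 0 := by simpa using habs.symm
      subst hc2N
      have hcN : cN ≠ 0 := by
        rcases hne with h | h | h
        · exact absurd rfl h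
        · exact h
        · exact absurd rfl h
      refine ⟨cN.arg, fun l => ?_⟩
      constructor
      · rintro ⟨h1, -⟩
        rw [im_formula] at h1
        have habsN : ‖cN‖ ≠ 0 := by simpa using hcN
        have hsin : Real.sin (cN.arg - l) = 0 := by
          rcases mul_eq_zero.1 h1 with h | h
          · exact absurd h habsN
          · exact h
        obtain ⟨n, hn⟩ := Real.sin_eq_zero_iff.1 hsin
        exact ⟨-n, by push_cast; linarith⟩
      · rintro ⟨k, rfl⟩
        constructor
        · rw [im_formula]
          rw [show cN.arg - (cN.arg + (k : ℝ) * Real.pi) = (-k : ℤ) * Real.pi by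
            push_cast; ring]
          rw [Real.sin_int_mul_pi, mul_zero]
        · simp
    · refine ⟨(c2N / (3 * (starRingEnd ℂ) c0)).arg / 2, fun l => ?_⟩
      constructor
      · rintro ⟨-, h2⟩
        exact (eq2_char c0 c2N hc0 habs l).1 h2
      · intro hk
        have h2 := (eq2_char c0 c2N hc0 habs l).2 hk
        exact ⟨auto1 c0 cN c2N l hc0 h2 him hre, h2⟩
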